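/- Gradient of the transformed Lyapunov functional (eq. (3.5) with Ψ(σ) = σ²/4): assume b lies in the range of E and let σ ∈ ℝ^m with σ_e ≠ 0 for every e; set μ = σ²/4 componentwise and let u ∈ ℝ^n be any solution of L[μ] u = b. Then the function 𝓛̂(σ') = sup_{u' ∈ ℝ^n} ( bᵀu' − ½ u'ᵀ L[σ'²/4] u' ) + (1/8) Σ_e w_e σ'_e², defined for σ' near σ, is differentiable at σ with gradient entries ∂𝓛̂/∂σ_e = (w_e σ_e / 4) ( 1 − ((G u)_e)² ) for e = 1,…,m. -/

import Mathlib

open Matrix BigOperators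

attribute [local instance] Matrix.linftyOpNormedAddCommGroup Matrix.linftyOpNormedSpace
  Matrix.linftyOpNormedRing Matrix.linftyOpNormedAlgebra

section helpers
lemma exists_Q {n m : ℕ} (E : Matrix (Fin n) (Fin m) ℝ) :
    ∃ Q : Matrix (Fin n) (Fin n) ℝ, Qᵀ = Q ∧
      (∀ x, 0 ≤ x ⬝ᵥ Q.mulVec x) ∧
      (∀ x, Eᵀ.mulVec (Q.mulVec x) = 0) ∧
      (∀ x, Eᵀ.mulVec x = 0 → Q.mulVec x = x) := by
  classical
  set K : Submodule ℝ (EuclideanSpace ℝ (Fin n)) :=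
    LinearMap.ker (Matrix.toEuclideanLin Eᵀ) with hK
  set P := (K.orthogonalProjectionOnto) with hP
  set eqv := WithLp.linearEquiv 2 ℝ (Fin n → ℝ) with heqv
  set ℓ : (Fin n → ℝ) →ₗ[ℝ] (Fin n → ℝ) :=
    eqv.toLinearMap ∘ₗ K.subtype ∘ₗ P.toLinearMap ∘ₗ eqv.symm.toLinearMap with hℓ
  set Q := LinearMap.toMatrix' ℓ with hQ
  have hml : ∀ x, Q.mulVec x = eqv ((P (eqv.symm x) : EuclideanSpace ℝ (Fin n))) := by
    intro x
    rw [hQ, ← Matrix.toLin'_apply, Matrix.toLin'_toMatrix']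
    rfl
  have hdot : ∀ x y : Fin n → ℝ,
      x ⬝ᵥ y = (inner ℝ (eqv.symm x) (eqv.symm y) : ℝ) := by
    intro x y
    simp only [PiLp.inner_apply, RCLike.inner_apply, conj_trivial, dotProduct]
    exact Finset.sum_congr rfl fun i _ => mul_comm _ _
  have hsymm_es : ∀ a : EuclideanSpace ℝ (Fin n), eqv.symm (eqv a) = a := fun a => rfl
  have hsym : ∀ x y, x ⬝ᵥ Q.mulVec y = Q.mulVec x ⬝ᵥ y := by
    intro x y
    rw [hml, hml, hdot, hdot, hsymm_es, hsymm_es]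
    exact (K.inner_starProjection_left_eq_right _ _).symm
  refine ⟨Q, ?_, ?_, ?_, ?_⟩
  · ext i j
    have h1 := hsym (Pi.single j 1) (Pi.single i 1)
    simpa [dotProduct, Pi.single_apply, Matrix.mulVec, Finset.sum_ite_eq,
      Finset.sum_ite_eq'] using h1
  · intro x
    rw [hml, hdot, hsymm_es]
    have h0 := Submodule.starProjection_inner_eq_zero (K := K) (eqv.symm x)
      (P (eqv.symm x)) (SetLike.coe_mem _)
    rw [inner_sub_left, sub_eq_zero] at h0
    rw [h0]
    exact real_inner_self_nonneg
  · intro x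
    rw [hml]
    have hmem : Matrix.toEuclideanLin Eᵀ ((P (eqv.symm x) : EuclideanSpace ℝ (Fin n))) = 0 :=
      LinearMap.mem_ker.mp (SetLike.coe_mem _)
    have h2 : Eᵀ.mulVec (eqv ((P (eqv.symm x) : EuclideanSpace ℝ (Fin n))))
        = (WithLp.equiv 2 (Fin m → ℝ))
            (Matrix.toEuclideanLin Eᵀ ((P (eqv.symm x)) : EuclideanSpace ℝ (Fin n))) := rfl
    exact h2.trans (by rw [hmem]; rfl)
  · intro x hx
    have hmem : eqv.symm x ∈ K := by
      rw [hK, LinearMap.mem_ker]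
      have : Matrix.toEuclideanLin Eᵀ (eqv.symm x)
          = (WithLp.equiv 2 (Fin m → ℝ)).symm (Eᵀ.mulVec x) := rfl
      rw [this, hx]
      simp
    rw [hml]
    show eqv (K.starProjection (eqv.symm x)) = x
    rw [Submodule.starProjection_eq_self_iff.mpr hmem]
    rfl

variable {n m : ℕ}

lemma sym_of_dot (A : Matrix (Fin n) (Fin n) ℝ)
    (h : ∀ x y : Fin n → ℝ, x ⬝ᵥ A.mulVec y = A.mulVec x ⬝ᵥ y) : Aᵀ = A := by
  ext i j
  have h1 := h (Pi.single j 1) (Pi.single i 1)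
  simpa [dotProduct, Pi.single_apply, Matrix.mulVec, Finset.sum_ite_eq,
    Finset.sum_ite_eq'] using h1

lemma G_eq (E : Matrix (Fin n) (Fin m) ℝ) (w : Fin m → ℝ) (hw : ∀ e, w e ≠ 0)
    {G : Matrix (Fin m) (Fin n) ℝ} (hG : G = (Matrix.diagonal w)⁻¹ * Eᵀ) :
    G = Matrix.diagonal (fun e => (w e)⁻¹) * Eᵀ := by
  rw [hG]
  congr 1
  apply Matrix.inv_eq_right_inv
  rw [Matrix.diagonal_mul_diagonal]
  rw [show (fun i => w i * (w i)⁻¹) = fun _ => (1:ℝ) from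
    funext fun e => mul_inv_cancel₀ (hw e)]
  exact Matrix.diagonal_one

lemma quadForm (E : Matrix (Fin n) (Fin m) ℝ) (w : Fin m → ℝ) (hw : ∀ e, w e ≠ 0)
    {G : Matrix (Fin m) (Fin n) ℝ} (hG : G = (Matrix.diagonal w)⁻¹ * Eᵀ)
    (d : Fin m → ℝ) (x y : Fin n → ℝ) :
    x ⬝ᵥ (E * Matrix.diagonal d * G).mulVec y
      = ∑ e, d e * (w e)⁻¹ * ((Eᵀ.mulVec x) e * (Eᵀ.mulVec y) e) := by
  rw [G_eq E w hw hG]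
  have h1 : (E * Matrix.diagonal d * (Matrix.diagonal (fun e => (w e)⁻¹) * Eᵀ)).mulVec y
      = E.mulVec ((Matrix.diagonal d).mulVec
          ((Matrix.diagonal fun e => (w e)⁻¹).mulVec (Eᵀ.mulVec y))) := by
    simp [Matrix.mulVec_mulVec, Matrix.mul_assoc]
  rw [h1, Matrix.dotProduct_mulVec, ← Matrix.mulVec_transpose]
  simp only [dotProduct, Matrix.mulVec_diagonal]
  exact Finset.sum_congr rfl fun e _ => by ring

lemma GmulVec (E : Matrix (Fin n) (Fin m) ℝ) (w : Fin m → ℝ) (hw : ∀ e, w e ≠ 0)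
    {G : Matrix (Fin m) (Fin n) ℝ} (hG : G = (Matrix.diagonal w)⁻¹ * Eᵀ) (x : Fin n → ℝ) :
    G.mulVec x = fun e => (w e)⁻¹ * (Eᵀ.mulVec x) e := by
  rw [G_eq E w hw hG, ← Matrix.mulVec_mulVec]
  funext e
  simp [Matrix.mulVec_diagonal]

lemma diag_decomp (E : Matrix (Fin n) (Fin m) ℝ) (G : Matrix (Fin m) (Fin n) ℝ)
    (d : Fin m → ℝ) :
    E * Matrix.diagonal d * G
      = ∑ e, d e • (E * Matrix.diagonal (Pi.single e (1:ℝ)) * G) := by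
  have h : Matrix.diagonal d = ∑ e, d e • Matrix.diagonal (Pi.single e (1:ℝ)) := by
    ext i j
    simp only [Matrix.sum_apply, Matrix.smul_apply, Matrix.diagonal_apply, Pi.single_apply,
      smul_eq_mul]
    by_cases hij : i = j
    · subst hij
      simp
    · simp [hij]
  rw [h]
  simp [Matrix.mul_sum, Matrix.sum_mul, mul_smul_comm, smul_mul_assoc]

end helpers

set_option maxHeartbeats 2000000 in
/-- Gradient of the transformed Lyapunov functional with `Ψ(σ) = σ²/4`: if `b` is in the
range of `E`, `σ_e ≠ 0` for all `e`, `μ = σ²/4` and `L[μ] u = b`, then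
`𝓛̂(σ') = sup_{u'} (bᵀu' − ½ u'ᵀ L[σ'²/4] u') + ⅛ Σ_e w_e σ'_e²` is differentiable at `σ`
with gradient entries `(w_e σ_e / 4)(1 − ((G u)_e)²)`. Here `G = W⁻¹Eᵀ`,
`L[μ] = E Diag(μ) G`. -/
theorem transformed_lyapunov_gradient {n m : ℕ} (hn : 0 < n) (hm : 0 < m)
    (E : Matrix (Fin n) (Fin m) ℝ) (w : Fin m → ℝ) (hw : ∀ e, 0 < w e)
    (b : Fin n → ℝ)
    (G : Matrix (Fin m) (Fin n) ℝ) (hG : G = (Matrix.diagonal w)⁻¹ * Eᵀ)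
    (hb : ∃ q₀ : Fin m → ℝ, E.mulVec q₀ = b)
    (σ : Fin m → ℝ) (hσ : ∀ e, σ e ≠ 0)
    (μ : Fin m → ℝ) (hμ : μ = fun e => (σ e)^2 / 4)
    (u : Fin n → ℝ) (hu : (E * Matrix.diagonal μ * G).mulVec u = b)
    (Lhat : (Fin m → ℝ) → ℝ)
    (hLhat : ∀ σ', Lhat σ' =
      sSup (Set.range fun u' : Fin n → ℝ =>
        b ⬝ᵥ u' - (1/2) * (u' ⬝ᵥ
          (E * Matrix.diagonal (fun e => (σ' e)^2 / 4) * G).mulVec u'))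
      + (1/8) * ∑ e, w e * (σ' e)^2) :
    HasFDerivAt Lhat
      (∑ e : Fin m, (w e * σ e / 4 * (1 - (G.mulVec u e)^2)) •
        (ContinuousLinearMap.proj e : (Fin m → ℝ) →L[ℝ] ℝ)) σ := by
  classical
  obtain ⟨q₀, hq₀⟩ := hb
  have hw' : ∀ e, w e ≠ 0 := fun e => (hw e).ne'
  obtain ⟨Q, hQsym, hQpos, hQker, hQid⟩ := exists_Q E
  set Lm : (Fin m → ℝ) → Matrix (Fin n) (Fin n) ℝ :=
    fun s => E * Matrix.diagonal (fun e => (s e)^2 / 4) * G with hLm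
  set Nf : (Fin m → ℝ) → Matrix (Fin n) (Fin n) ℝ := fun s => Lm s + Q with hNf
  have hLsym : ∀ s, (Lm s)ᵀ = Lm s := by
    intro s
    apply sym_of_dot
    intro x y
    rw [show Lm s = E * Matrix.diagonal (fun e => (s e)^2 / 4) * G from rfl]
    rw [quadForm E w hw' hG, dotProduct_comm, quadForm E w hw' hG]
    exact Finset.sum_congr rfl fun e _ => by ring
  have hNsym : ∀ s, (Nf s)ᵀ = Nf s := by
    intro s
    rw [show Nf s = Lm s + Q from rfl, Matrix.transpose_add, hLsym, hQsym]
  -- invertibility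
  have hinv : ∀ s : Fin m → ℝ, (∀ e, s e ≠ 0) → IsUnit (Nf s).det := by
    intro s hs
    rw [isUnit_iff_ne_zero]
    intro hdet
    obtain ⟨v, hv0, hv⟩ := (Matrix.exists_mulVec_eq_zero_iff).mpr hdet
    have hsum : v ⬝ᵥ (Lm s).mulVec v + v ⬝ᵥ Q.mulVec v = 0 := by
      have h0 : v ⬝ᵥ (Nf s).mulVec v = 0 := by rw [hv, dotProduct_zero]
      rw [show Nf s = Lm s + Q from rfl] at h0
      rwa [Matrix.add_mulVec, dotProduct_add] at h0
    have hLnn : 0 ≤ v ⬝ᵥ (Lm s).mulVec v := by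
      rw [show Lm s = E * Matrix.diagonal (fun e => (s e)^2 / 4) * G from rfl,
        quadForm E w hw' hG]
      exact Finset.sum_nonneg fun e _ =>
        mul_nonneg (mul_nonneg (by positivity) (inv_nonneg.mpr (hw e).le)) (mul_self_nonneg _)
    have hLzero : v ⬝ᵥ (Lm s).mulVec v = 0 := le_antisymm (by linarith [hQpos v]) hLnn
    have hEv : Eᵀ.mulVec v = 0 := by
      rw [show Lm s = E * Matrix.diagonal (fun e => (s e)^2 / 4) * G from rfl,
        quadForm E w hw' hG] at hLzero
      have h2 := (Finset.sum_eq_zero_iff_of_nonneg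
        (fun e _ => mul_nonneg (mul_nonneg (by positivity) (inv_nonneg.mpr (hw e).le))
          (mul_self_nonneg _) : ∀ e ∈ Finset.univ,
          (0:ℝ) ≤ (s e)^2/4 * (w e)⁻¹ * ((Eᵀ.mulVec v) e * (Eᵀ.mulVec v) e))).mp hLzero
      funext e
      have h3 := h2 e (Finset.mem_univ e)
      have hse : (s e)^2/4 * (w e)⁻¹ ≠ 0 := by
        have h4 := hs e; have h5 := hw' e; positivity
      have h6 : (Eᵀ.mulVec v) e * (Eᵀ.mulVec v) e = 0 := by
        rcases mul_eq_zero.mp h3 with h | h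
        · exact absurd h hse
        · exact h
      simpa using mul_self_eq_zero.mp h6
    have hveq : v = 0 := by
      have hQv : Q.mulVec v = v := hQid v hEv
      have h7 : v ⬝ᵥ v = 0 := by
        rw [hLzero, hQv] at hsum; linarith
      exact dotProduct_self_eq_zero.mp h7
    exact hv0 hveq
  -- solving
  have hsolve : ∀ s : Fin m → ℝ, (∀ e, s e ≠ 0) →
      (Lm s).mulVec ((Nf s)⁻¹.mulVec b) = b := by
    intro s hs
    set x := (Nf s)⁻¹.mulVec b with hx
    have hNx : (Nf s).mulVec x = b := by
      rw [hx, Matrix.mulVec_mulVec, Matrix.mul_nonsing_inv _ (hinv s hs), Matrix.one_mulVec]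
    have hsplit : (Lm s).mulVec x + Q.mulVec x = b := by
      rw [← hNx, show Nf s = Lm s + Q from rfl, Matrix.add_mulVec]
    set v := Q.mulVec x with hvdef
    have hEv : Eᵀ.mulVec v = 0 := hQker x
    set y := q₀ - (Matrix.diagonal (fun e => (s e)^2/4) * G).mulVec x with hy
    have hvrange : v = E.mulVec y := by
      rw [hy, Matrix.mulVec_sub, hq₀, Matrix.mulVec_mulVec, ← Matrix.mul_assoc]
      exact eq_sub_of_add_eq' hsplit
    have hv0 : v = 0 := by
      have h8 : v ⬝ᵥ v = 0 := by
        calc v ⬝ᵥ v = v ⬝ᵥ E.mulVec y := by rw [← hvrange]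
        _ = (Eᵀ.mulVec v) ⬝ᵥ y := by rw [Matrix.dotProduct_mulVec, ← Matrix.mulVec_transpose]
        _ = 0 := by rw [hEv, zero_dotProduct]
      exact dotProduct_self_eq_zero.mp h8
    have := hsplit
    rw [hv0, add_zero] at this
    exact this
  -- Lhat formula on the open set
  have hform : ∀ s : Fin m → ℝ, (∀ e, s e ≠ 0) →
      Lhat s = (1/2) * (b ⬝ᵥ ((Nf s)⁻¹.mulVec b)) + (1/8) * ∑ e, w e * (s e)^2 := by
    intro s hs
    set x := (Nf s)⁻¹.mulVec b with hx
    have hLx : (Lm s).mulVec x = b := hsolve s hs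
    set c : Fin m → ℝ := fun e => (s e)^2/4 * (w e)⁻¹ with hc
    set A := Eᵀ.mulVec x with hA
    have hbx : b ⬝ᵥ x = ∑ e, c e * (A e * A e) := by
      rw [← hLx, dotProduct_comm, show Lm s = E * Matrix.diagonal (fun e => (s e)^2 / 4) * G
        from rfl, quadForm E w hw' hG]
    have hxx : x ⬝ᵥ (Lm s).mulVec x = ∑ e, c e * (A e * A e) := by
      rw [show Lm s = E * Matrix.diagonal (fun e => (s e)^2 / 4) * G from rfl,
        quadForm E w hw' hG]
    have hub : ∀ v : Fin n → ℝ,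
        b ⬝ᵥ v - (1/2) * (v ⬝ᵥ (Lm s).mulVec v)
          ≤ b ⬝ᵥ x - (1/2) * (x ⬝ᵥ (Lm s).mulVec x) := by
      intro v
      set B := Eᵀ.mulVec v with hB
      have hbv : b ⬝ᵥ v = ∑ e, c e * (B e * A e) := by
        rw [← hLx, dotProduct_comm, show Lm s = E * Matrix.diagonal (fun e => (s e)^2 / 4) * G
          from rfl, quadForm E w hw' hG]
      have hvv : v ⬝ᵥ (Lm s).mulVec v = ∑ e, c e * (B e * B e) := by
        rw [show Lm s = E * Matrix.diagonal (fun e => (s e)^2 / 4) * G from rfl,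
          quadForm E w hw' hG]
      have key : (b ⬝ᵥ x - (1/2) * (x ⬝ᵥ (Lm s).mulVec x))
          - (b ⬝ᵥ v - (1/2) * (v ⬝ᵥ (Lm s).mulVec v))
          = ∑ e, c e / 2 * (A e - B e)^2 := by
        rw [hbv, hbx, hvv, hxx, Finset.mul_sum, Finset.mul_sum,
          ← Finset.sum_sub_distrib, ← Finset.sum_sub_distrib, ← Finset.sum_sub_distrib]
        exact Finset.sum_congr rfl fun e _ => by ring
      have hnn : 0 ≤ ∑ e, c e / 2 * (A e - B e)^2 := Finset.sum_nonneg fun e _ => by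
        have h9 : 0 ≤ c e := by
          rw [hc]; have := (hw e).le; positivity
        positivity
      linarith [key, hnn]
    have hgr : IsGreatest (Set.range fun u' : Fin n → ℝ =>
        b ⬝ᵥ u' - (1/2) * (u' ⬝ᵥ
          (E * Matrix.diagonal (fun e => (s e)^2 / 4) * G).mulVec u'))
        (b ⬝ᵥ x - (1/2) * (x ⬝ᵥ (Lm s).mulVec x)) :=
      ⟨⟨x, rfl⟩, by rintro r ⟨v, rfl⟩; exact hub v⟩
    rw [hLhat s, hgr.csSup_eq]
    have h10 : x ⬝ᵥ (Lm s).mulVec x = b ⬝ᵥ x := by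
      rw [hLx, dotProduct_comm]
    rw [h10]; ring
  -- derivative setup
  set Me : Fin m → Matrix (Fin n) (Fin n) ℝ :=
    fun e => E * Matrix.diagonal (Pi.single e (1:ℝ)) * G with hMe
  set N₀ : Matrix (Fin n) (Fin n) ℝ := Nf σ with hN₀
  have hdet := hinv σ hσ
  have hU : IsUnit N₀ := (Matrix.isUnit_iff_isUnit_det _).mpr hdet
  set T : (Fin m → ℝ) →L[ℝ] Matrix (Fin n) (Fin n) ℝ :=
    ∑ e, ((σ e / 2) • (ContinuousLinearMap.proj e : (Fin m → ℝ) →L[ℝ] ℝ)).smulRight (Me e)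
    with hT
  have hNfderiv : HasFDerivAt Nf T σ := by
    have hrepr : Nf = fun s => (∑ e, ((s e)^2/4) • Me e) + Q := by
      funext s
      rw [show Nf s = Lm s + Q from rfl]
      congr 1
      rw [show Lm s = E * Matrix.diagonal (fun e => (s e)^2 / 4) * G from rfl]
      simpa using diag_decomp E G (fun e => (s e)^2/4)
    rw [hrepr, hT]
    apply HasFDerivAt.add_const
    apply HasFDerivAt.fun_sum
    intro e _
    have hp : HasFDerivAt (fun s : Fin m → ℝ => s e)
        (ContinuousLinearMap.proj e : (Fin m → ℝ) →L[ℝ] ℝ) σ :=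
      hasFDerivAt_apply e σ
    have h1 : HasFDerivAt (fun s : Fin m → ℝ => (s e)^2/4)
        ((σ e / 2) • (ContinuousLinearMap.proj e : (Fin m → ℝ) →L[ℝ] ℝ)) σ := by
      have h2 := (hp.mul hp).const_mul (1/4 : ℝ)
      have hfun : (fun s : Fin m → ℝ => (s e)^2/4) = fun s => (1/4 : ℝ) * (s e * s e) := by
        funext s; rw [pow_two]; ring
      rw [hfun]
      refine h2.congr_fderiv ?_
      ext v
      simp [ContinuousLinearMap.smul_apply]
      ring
    exact h1.smul_const (Me e)
  set φL : Matrix (Fin n) (Fin n) ℝ →ₗ[ℝ] ℝ :=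
    { toFun := fun M => b ⬝ᵥ M.mulVec b
      map_add' := fun M N => by simp [Matrix.add_mulVec, dotProduct_add]
      map_smul' := fun c M => by
        simp [Matrix.smul_mulVec, dotProduct_smul] } with hφL
  set φ := LinearMap.toContinuousLinearMap φL with hφdef
  set S : Matrix (Fin n) (Fin n) ℝ →L[ℝ] Matrix (Fin n) (Fin n) ℝ :=
    -((ContinuousLinearMap.mulLeftRight ℝ _ (N₀⁻¹)) (N₀⁻¹)) with hS
  have hinvderiv : HasFDerivAt (fun M : Matrix (Fin n) (Fin n) ℝ => M⁻¹) S N₀ := by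
    have h := hasFDerivAt_ringInverse (𝕜 := ℝ) hU.unit
    have hcoe : (↑hU.unit : Matrix (Fin n) (Fin n) ℝ) = N₀ := hU.unit_spec
    have hcoeinv : (↑hU.unit⁻¹ : Matrix (Fin n) (Fin n) ℝ) = N₀⁻¹ :=
      ((Ring.inverse_unit hU.unit).symm.trans
        (congrArg Ring.inverse hcoe)).trans (Matrix.nonsing_inv_eq_ringInverse N₀).symm
    rw [hcoe, hcoeinv] at h
    exact h.congr_of_eventuallyEq
      (Filter.Eventually.of_forall fun M => Matrix.nonsing_inv_eq_ringInverse M)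
  have hcomp1 : HasFDerivAt (fun s => b ⬝ᵥ ((Nf s)⁻¹.mulVec b))
      (φ.comp (S.comp T)) σ :=
    (φ.hasFDerivAt).comp σ (hinvderiv.comp σ hNfderiv)
  have hsum2 : HasFDerivAt (fun s : Fin m → ℝ => ∑ e, w e * (s e)^2)
      (∑ e, (w e * (2 * σ e)) • (ContinuousLinearMap.proj e : (Fin m → ℝ) →L[ℝ] ℝ)) σ := by
    apply HasFDerivAt.fun_sum
    intro e _
    have hp : HasFDerivAt (fun s : Fin m → ℝ => s e)
        (ContinuousLinearMap.proj e : (Fin m → ℝ) →L[ℝ] ℝ) σ :=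
      hasFDerivAt_apply e σ
    have h2 := (hp.mul hp).const_mul (w e)
    have hfun : (fun s : Fin m → ℝ => w e * (s e)^2) = fun s => w e * (s e * s e) := by
      funext s; rw [pow_two]
    rw [hfun]
    refine h2.congr_fderiv ?_
    ext v
    simp [ContinuousLinearMap.smul_apply]
    ring
  have hD : HasFDerivAt
      (fun s => (1/2) * (b ⬝ᵥ ((Nf s)⁻¹.mulVec b)) + (1/8) * ∑ e, w e * (s e)^2)
      ((1/2 : ℝ) • (φ.comp (S.comp T)) + (1/8 : ℝ) •
        ∑ e, (w e * (2 * σ e)) • (ContinuousLinearMap.proj e : (Fin m → ℝ) →L[ℝ] ℝ)) σ :=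
    (hcomp1.const_mul (1/2)).add (hsum2.const_mul (1/8))
  -- identify G u
  set x₀ := (Nf σ)⁻¹.mulVec b with hx₀def
  have hx₀ : (Lm σ).mulVec x₀ = b := hsolve σ hσ
  have huσ : (Lm σ).mulVec u = b := by
    rw [hμ] at hu; exact hu
  have hEu : Eᵀ.mulVec u = Eᵀ.mulVec x₀ := by
    have hz : (Lm σ).mulVec (u - x₀) = 0 := by rw [Matrix.mulVec_sub, huσ, hx₀, sub_self]
    have h0 : (u - x₀) ⬝ᵥ (Lm σ).mulVec (u - x₀) = 0 := by rw [hz, dotProduct_zero]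
    rw [show Lm σ = E * Matrix.diagonal (fun e => (σ e)^2 / 4) * G from rfl,
      quadForm E w hw' hG] at h0
    have h2 := (Finset.sum_eq_zero_iff_of_nonneg
      (fun e _ => mul_nonneg (mul_nonneg (by positivity) (inv_nonneg.mpr (hw e).le))
        (mul_self_nonneg _) : ∀ e ∈ Finset.univ,
        (0:ℝ) ≤ (σ e)^2/4 * (w e)⁻¹ *
          ((Eᵀ.mulVec (u - x₀)) e * (Eᵀ.mulVec (u - x₀)) e))).mp h0
    funext e
    have h3 := h2 e (Finset.mem_univ e)
    have hse : (σ e)^2/4 * (w e)⁻¹ ≠ 0 := by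
      have h4 := hσ e; have h5 := hw' e; positivity
    have h6 : (Eᵀ.mulVec (u - x₀)) e = 0 := by
      rcases mul_eq_zero.mp h3 with h | h
      · exact absurd h hse
      · exact mul_self_eq_zero.mp h
    have h8 := congrFun (Matrix.mulVec_sub Eᵀ u x₀) e
    rw [h6] at h8
    have h9 : (Eᵀ.mulVec u) e - (Eᵀ.mulVec x₀) e = 0 := by
      simpa [Pi.sub_apply] using h8.symm
    linarith
  have hGu : G.mulVec u = G.mulVec x₀ := by
    rw [GmulVec E w hw' hG, GmulVec E w hw' hG, hEu]
  have hMeval : ∀ e, x₀ ⬝ᵥ (Me e).mulVec x₀ = w e * (G.mulVec u e)^2 := by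
    intro e
    rw [show Me e = E * Matrix.diagonal (Pi.single e (1:ℝ)) * G from rfl,
      quadForm E w hw' hG]
    have h1 : ∑ e', (Pi.single e (1:ℝ) : Fin m → ℝ) e' * (w e')⁻¹ *
        ((Eᵀ.mulVec x₀) e' * (Eᵀ.mulVec x₀) e')
        = (w e)⁻¹ * ((Eᵀ.mulVec x₀) e * (Eᵀ.mulVec x₀) e) := by
      rw [Finset.sum_eq_single e (fun e' _ he' => by simp [Pi.single_apply, he'])
        (fun h => absurd (Finset.mem_univ e) h)]
      simp
    rw [h1]
    have h2 : G.mulVec u e = (w e)⁻¹ * (Eᵀ.mulVec x₀) e := by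
      rw [hGu, GmulVec E w hw' hG]
    rw [h2]
    have := hw' e
    field_simp
  -- equality of derivatives
  have hDeq : ((1/2 : ℝ) • (φ.comp (S.comp T)) + (1/8 : ℝ) •
        ∑ e, (w e * (2 * σ e)) • (ContinuousLinearMap.proj e : (Fin m → ℝ) →L[ℝ] ℝ))
      = ∑ e : Fin m, (w e * σ e / 4 * (1 - (G.mulVec u e)^2)) •
        (ContinuousLinearMap.proj e : (Fin m → ℝ) →L[ℝ] ℝ) := by
    apply ContinuousLinearMap.ext
    intro h
    have hTh : T h = ∑ e, (σ e / 2 * h e) • Me e := by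
      rw [hT]
      simp [ContinuousLinearMap.sum_apply, ContinuousLinearMap.smulRight_apply,
        ContinuousLinearMap.smul_apply, smul_smul]
    have hNt : (N₀⁻¹)ᵀ = N₀⁻¹ := by
      rw [Matrix.transpose_nonsing_inv, show N₀ᵀ = N₀ from hNsym σ]
    have hSTh : φ (S (T h)) = - (x₀ ⬝ᵥ (T h).mulVec x₀) := by
      show φ (-(N₀⁻¹ * T h * N₀⁻¹)) = _
      rw [map_neg, neg_inj]
      show b ⬝ᵥ (N₀⁻¹ * T h * N₀⁻¹).mulVec b = x₀ ⬝ᵥ (T h).mulVec x₀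
      rw [← Matrix.mulVec_mulVec, ← Matrix.mulVec_mulVec,
        Matrix.dotProduct_mulVec b N₀⁻¹ _, ← Matrix.mulVec_transpose, hNt]
    have hlin : x₀ ⬝ᵥ (∑ e, (σ e / 2 * h e) • Me e).mulVec x₀
        = ∑ e, (σ e / 2 * h e) * (x₀ ⬝ᵥ (Me e).mulVec x₀) := by
      let ψ : Matrix (Fin n) (Fin n) ℝ →ₗ[ℝ] ℝ :=
        { toFun := fun A => x₀ ⬝ᵥ A.mulVec x₀
          map_add' := fun A B => by simp [Matrix.add_mulVec, dotProduct_add]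
          map_smul' := fun r A => by simp [Matrix.smul_mulVec, dotProduct_smul] }
      have h1 : x₀ ⬝ᵥ (∑ e, (σ e / 2 * h e) • Me e).mulVec x₀
          = ψ (∑ e, (σ e / 2 * h e) • Me e) := rfl
      rw [h1, map_sum]
      exact Finset.sum_congr rfl fun e _ => by
        rw [LinearMap.map_smul]; rfl
    have hquad : x₀ ⬝ᵥ (T h).mulVec x₀
        = ∑ e, (σ e / 2 * h e) * (w e * (G.mulVec u e)^2) := by
      rw [hTh, hlin]
      exact Finset.sum_congr rfl fun e _ => by rw [hMeval e]
    simp only [ContinuousLinearMap.add_apply, ContinuousLinearMap.smul_apply,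
      ContinuousLinearMap.coe_comp', Function.comp_apply, ContinuousLinearMap.sum_apply,
      ContinuousLinearMap.proj_apply, smul_eq_mul]
    rw [show (φ ((S (T h)))) = - (x₀ ⬝ᵥ (T h).mulVec x₀) from hSTh, hquad]
    rw [mul_neg, Finset.mul_sum, Finset.mul_sum, ← Finset.sum_neg_distrib]
    exact (Finset.sum_add_distrib).symm.trans
      (Finset.sum_congr rfl fun e _ => by ring)
  -- conclude
  have hopen : IsOpen {s : Fin m → ℝ | ∀ e, s e ≠ 0} := by
    have h : {s : Fin m → ℝ | ∀ e, s e ≠ 0}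
        = ⋂ e, (fun s : Fin m → ℝ => s e) ⁻¹' {t | t ≠ 0} := by
      ext s; simp
    rw [h]
    exact isOpen_iInter_of_finite fun e => (isOpen_ne).preimage (continuous_apply e)
  have heq : Lhat =ᶠ[nhds σ]
      fun s => (1/2) * (b ⬝ᵥ ((Nf s)⁻¹.mulVec b)) + (1/8) * ∑ e, w e * (s e)^2 :=
    Filter.eventuallyEq_of_mem (hopen.mem_nhds hσ) (fun s hs => hform s hs)
  exact (hDeq ▸ hD).congr_of_eventuallyEq heq
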